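/- For every q > 0 there exists a constant c(q) > 0 such that for all u, v ∈ ℝ^N one has |⟦u⟧^{(q+1)/2} − ⟦v⟧^{(q+1)/2}|^2 ≤ c(q) 𝔟[u,v] and 𝔟[u,v] ≤ (⟦v⟧^q − ⟦u⟧^q) · (v − u); in particular 𝔟[u,v] ≥ 0. -/

import Mathlib

open Real RealInnerProductSpace

/-- The power `⟦w⟧^α := |w|^{α−1} w` (with `⟦0⟧^α = 0`). -/
noncomputable def vpow {N : ℕ} (α : ℝ) (w : EuclideanSpace ℝ (Fin N)) :
    EuclideanSpace ℝ (Fin N) :=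
  ‖w‖ ^ (α - 1) • w

/-- The boundary term `𝔟[u,v] := (1/(q+1))|v|^{q+1} − (1/(q+1))|u|^{q+1} − ⟦u⟧^q · (v − u)`. -/
noncomputable def bdry {N : ℕ} (q : ℝ) (u v : EuclideanSpace ℝ (Fin N)) : ℝ :=
  (1 / (q + 1)) * ‖v‖ ^ (q + 1) - (1 / (q + 1)) * ‖u‖ ^ (q + 1) - ⟪vpow q u, v - u⟫

private lemma rpow_succ {x : ℝ} (hx : 0 ≤ x) {e f : ℝ} (hef : e + 1 = f) (hf : f ≠ 0) :
    x ^ e * x = x ^ f := by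
  rw [← hef, Real.rpow_add' hx (by rw [hef]; exact hf), Real.rpow_one]

private lemma youngA {q a b : ℝ} (hq : 0 < q) (ha : 0 ≤ a) (hb : 0 ≤ b) :
    a ^ q * b ≤ (q / (q + 1)) * a ^ (q + 1) + (1 / (q + 1)) * b ^ (q + 1) := by
  have hq1 : (0:ℝ) < q + 1 := by linarith
  have hsum : q / (q+1) + 1 / (q+1) = 1 := by
    rw [← add_div, div_self hq1.ne']
  have h := Real.geom_mean_le_arith_mean2_weighted
    (w₁ := q/(q+1)) (w₂ := 1/(q+1)) (p₁ := a^(q+1)) (p₂ := b^(q+1))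
    (div_nonneg hq.le hq1.le) (by positivity)
    (Real.rpow_nonneg ha (q+1)) (Real.rpow_nonneg hb (q+1)) hsum
  have e1 : (a ^ (q+1)) ^ (q / (q+1)) = a ^ q := by
    rw [← Real.rpow_mul ha]; congr 1; field_simp
  have e2 : (b ^ (q+1)) ^ (1 / (q+1)) = b := by
    rw [← Real.rpow_mul hb]
    rw [show (q+1) * (1/(q+1)) = 1 by field_simp, Real.rpow_one]
  rwa [e1, e2] at h

private lemma key1 {q a b : ℝ} (hq : 0 < q) (ha : 0 ≤ a) (hb : 0 ≤ b) :
    min q 1 * (a ^ (q+1) + b ^ (q+1) - 2 * (a ^ ((q+1)/2) * b ^ ((q+1)/2)))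
      ≤ q * a ^ (q+1) + b ^ (q+1) - (q+1) * (a ^ q * b) := by
  have hq1 : (0:ℝ) < q + 1 := by linarith
  set m : ℝ := (q+1)/2 with hm
  have hm0 : 0 < m := by rw [hm]; linarith
  rcases le_total q 1 with hle | hle
  · rw [min_eq_left hle]
    have hw1 : (0:ℝ) ≤ (1 - q)/(q+1) := by
      apply div_nonneg <;> linarith
    have hw2 : (0:ℝ) ≤ 2*q/(q+1) := by positivity
    have hsum : (1-q)/(q+1) + 2*q/(q+1) = 1 := by
      rw [← add_div, show (1-q) + 2*q = q+1 by ring, div_self hq1.ne']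
    have h := Real.geom_mean_le_arith_mean2_weighted
      (w₁ := (1-q)/(q+1)) (w₂ := 2*q/(q+1)) (p₁ := b^(q+1)) (p₂ := a^m * b^m)
      hw1 hw2 (Real.rpow_nonneg hb (q+1))
      (mul_nonneg (Real.rpow_nonneg ha m) (Real.rpow_nonneg hb m)) hsum
    have e1 : (b ^ (q+1)) ^ ((1-q)/(q+1)) = b ^ (1-q) := by
      rw [← Real.rpow_mul hb]; congr 1; field_simp
    have e2 : (a ^ m * b ^ m) ^ (2*q/(q+1)) = a ^ q * b ^ q := by
      rw [Real.mul_rpow (Real.rpow_nonneg ha m) (Real.rpow_nonneg hb m),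
        ← Real.rpow_mul ha, ← Real.rpow_mul hb]
      rw [show m * (2*q/(q+1)) = q by rw [hm]; field_simp; try ring]
    have e3 : b ^ (1-q) * (a ^ q * b ^ q) = a ^ q * b := by
      rw [show b ^ (1-q) * (a ^ q * b ^ q) = a ^ q * (b ^ (1-q) * b ^ q) by ring,
        ← Real.rpow_add' hb (by norm_num)]
      norm_num
    rw [e1, e2, e3] at h
    have h5 : (q+1) * (a ^ q * b) ≤ (1-q) * b ^ (q+1) + (2*q) * (a ^ m * b ^ m) := by
      have h6 := mul_le_mul_of_nonneg_left h hq1.le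
      calc (q+1) * (a^q*b) ≤ (q+1) * ((1-q)/(q+1) * b^(q+1) + 2*q/(q+1) * (a^m*b^m)) := h6
        _ = (1-q) * b^(q+1) + (2*q) * (a^m*b^m) := by field_simp; try ring
    nlinarith [h5]
  · rw [min_eq_right hle]
    have hw1 : (0:ℝ) ≤ (q - 1)/(q+1) := by
      apply div_nonneg <;> linarith
    have hw2 : (0:ℝ) ≤ 2/(q+1) := by positivity
    have hsum : (q-1)/(q+1) + 2/(q+1) = 1 := by
      rw [← add_div, show (q-1) + 2 = q+1 by ring, div_self hq1.ne']
    have h := Real.geom_mean_le_arith_mean2_weighted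
      (w₁ := (q-1)/(q+1)) (w₂ := 2/(q+1)) (p₁ := a^(q+1)) (p₂ := a^m * b^m)
      hw1 hw2 (Real.rpow_nonneg ha (q+1))
      (mul_nonneg (Real.rpow_nonneg ha m) (Real.rpow_nonneg hb m)) hsum
    have e1 : (a ^ (q+1)) ^ ((q-1)/(q+1)) = a ^ (q-1) := by
      rw [← Real.rpow_mul ha]; congr 1; field_simp
    have e2 : (a ^ m * b ^ m) ^ (2/(q+1)) = a * b := by
      rw [Real.mul_rpow (Real.rpow_nonneg ha m) (Real.rpow_nonneg hb m),
        ← Real.rpow_mul ha, ← Real.rpow_mul hb]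
      rw [show m * (2/(q+1)) = 1 by rw [hm]; field_simp, Real.rpow_one, Real.rpow_one]
    have e3 : a ^ (q-1) * (a * b) = a ^ q * b := by
      rw [show a ^ (q-1) * (a * b) = (a ^ (q-1) * a) * b by ring,
        rpow_succ ha (by ring) hq.ne']
    rw [e1, e2, e3] at h
    have h5 : (q+1) * (a ^ q * b) ≤ (q-1) * a ^ (q+1) + 2 * (a ^ m * b ^ m) := by
      have h6 := mul_le_mul_of_nonneg_left h hq1.le
      calc (q+1) * (a^q*b) ≤ (q+1) * ((q-1)/(q+1) * a^(q+1) + 2/(q+1) * (a^m*b^m)) := h6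
        _ = (q-1) * a^(q+1) + 2 * (a^m*b^m) := by field_simp; try ring
    nlinarith [h5]


set_option maxHeartbeats 1000000 in
/-- For every `q > 0` there is `c(q) > 0` with
`|⟦u⟧^{(q+1)/2} − ⟦v⟧^{(q+1)/2}|^2 ≤ c(q) 𝔟[u,v]` and
`𝔟[u,v] ≤ (⟦v⟧^q − ⟦u⟧^q) · (v − u)`; in particular `𝔟[u,v] ≥ 0`. -/
theorem bdry_estimates (N : ℕ) (q : ℝ) (hq : 0 < q) :
    ∃ c : ℝ, 0 < c ∧ ∀ u v : EuclideanSpace ℝ (Fin N),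
      ‖vpow ((q + 1) / 2) u - vpow ((q + 1) / 2) v‖ ^ (2 : ℕ) ≤ c * bdry q u v ∧
      bdry q u v ≤ ⟪vpow q v - vpow q u, v - u⟫ ∧
      0 ≤ bdry q u v := by
  have hq1 : (0:ℝ) < q + 1 := by linarith
  have hq1' : q + 1 ≠ 0 := hq1.ne'
  set c : ℝ := 2*(q+1)^2/q with hc_def
  have hc0 : 0 < c := by rw [hc_def]; positivity
  have hcq : ∀ x : ℝ, q*(c*x) = 2*(q+1)^2*x := by
    intro x; rw [hc_def]; field_simp; try ring
  clear_value c
  refine ⟨c, hc0, fun u v => ?_⟩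
  set a := ‖u‖ with ha_def
  set b := ‖v‖ with hb_def
  have ha : 0 ≤ a := norm_nonneg u
  have hb : 0 ≤ b := norm_nonneg v
  set t : ℝ := ⟪u, v⟫ with ht_def
  have ht1 : t ≤ a * b := real_inner_le_norm u v
  have ht2 : -(a*b) ≤ t := by
    have h := abs_real_inner_le_norm u v
    rw [abs_le] at h
    linarith [h.1]
  set m : ℝ := (q+1)/2 with hm
  have hm0 : 0 < m := by rw [hm]; linarith
  have hmm : m + m = q + 1 := by rw [hm]; ring
  -- scalar translations
  have h_bu : ⟪vpow q u, v - u⟫ = a^(q-1)*t - a^(q+1) := by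
    rw [vpow, inner_sub_right, real_inner_smul_left, real_inner_smul_left,
      real_inner_self_eq_norm_mul_norm]
    rw [show a^(q-1)*(a*a) = (a^(q-1)*a)*a by ring, rpow_succ ha (by ring) hq.ne',
      rpow_succ ha rfl hq1']
  have h_bv : ⟪vpow q v, v - u⟫ = b^(q+1) - b^(q-1)*t := by
    rw [vpow, inner_sub_right, real_inner_smul_left, real_inner_smul_left,
      real_inner_self_eq_norm_mul_norm, real_inner_comm u v]
    rw [show b^(q-1)*(b*b) = (b^(q-1)*b)*b by ring, rpow_succ hb (by ring) hq.ne',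
      rpow_succ hb rfl hq1']
  have h_bdry' : (q+1)*(bdry q u v) = b^(q+1) + q*a^(q+1) - (q+1)*(a^(q-1)*t) := by
    rw [bdry, h_bu]; field_simp; try ring
  have hnu : ‖vpow m u‖ = a ^ m := by
    rw [vpow, norm_smul, Real.norm_of_nonneg (Real.rpow_nonneg ha _)]
    exact rpow_succ ha (by ring) hm0.ne'
  have hnv : ‖vpow m v‖ = b ^ m := by
    rw [vpow, norm_smul, Real.norm_of_nonneg (Real.rpow_nonneg hb _)]
    exact rpow_succ hb (by ring) hm0.ne'
  have hiuv : ⟪vpow m u, vpow m v⟫ = (a^(m-1)*b^(m-1)) * t := by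
    rw [vpow, vpow, real_inner_smul_left, real_inner_smul_right]; ring
  have hA2 : (a^m)^2 = a^(q+1) := by
    rw [sq, ← Real.rpow_add' ha (by rw [hmm]; exact hq1'), hmm]
  have hB2 : (b^m)^2 = b^(q+1) := by
    rw [sq, ← Real.rpow_add' hb (by rw [hmm]; exact hq1'), hmm]
  have h3 : ‖vpow m u - vpow m v‖^2
      = a^(q+1) + b^(q+1) - 2*((a^(m-1)*b^(m-1))*t) := by
    rw [norm_sub_sq_real, hnu, hnv, hiuv, hA2, hB2]; ring
  clear_value a b t m
  -- product facts
  have hκab : (a^(m-1)*b^(m-1))*(a*b) = a^m*b^m := by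
    rw [show (a^(m-1)*b^(m-1))*(a*b) = (a^(m-1)*a)*(b^(m-1)*b) by ring,
      rpow_succ ha (by ring) hm0.ne', rpow_succ hb (by ring) hm0.ne']
  have hrab : a^(q-1)*(a*b) = a^q*b := by
    rw [show a^(q-1)*(a*b) = (a^(q-1)*a)*b by ring, rpow_succ ha (by ring) hq.ne']
  have hsab : b^(q-1)*(a*b) = b^q*a := by
    rw [show b^(q-1)*(a*b) = (b^(q-1)*b)*a by ring, rpow_succ hb (by ring) hq.ne']
  -- nonneg facts
  have hA0 : 0 ≤ a^(q+1) := Real.rpow_nonneg ha _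
  have hB0 : 0 ≤ b^(q+1) := Real.rpow_nonneg hb _
  have hP0 : 0 ≤ a^m*b^m := mul_nonneg (Real.rpow_nonneg ha _) (Real.rpow_nonneg hb _)
  have hκ0 : 0 ≤ a^(m-1)*b^(m-1) :=
    mul_nonneg (Real.rpow_nonneg ha _) (Real.rpow_nonneg hb _)
  have hr0 : 0 ≤ a^(q-1) := Real.rpow_nonneg ha _
  have hs0 : 0 ≤ b^(q-1) := Real.rpow_nonneg hb _
  have hg0 : 0 ≤ a^q*b := mul_nonneg (Real.rpow_nonneg ha _) hb
  have hL0 : 0 ≤ a^(q+1) + b^(q+1) - 2*(a^m*b^m) := by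
    have hsq := sq_nonneg (a^m - b^m)
    rw [sub_sq, hA2, hB2] at hsq
    linarith [hsq]
  -- young inequalities in cleared form
  have hy1 : (q+1)*(a^q*b) ≤ q*a^(q+1) + b^(q+1) := by
    have h := youngA hq ha hb
    calc (q+1)*(a^q*b) ≤ (q+1)*((q/(q+1))*a^(q+1) + (1/(q+1))*b^(q+1)) :=
          mul_le_mul_of_nonneg_left h hq1.le
      _ = q*a^(q+1) + b^(q+1) := by field_simp; try ring
  have hy2 : (q+1)*(b^q*a) ≤ q*b^(q+1) + a^(q+1) := by
    have h := youngA hq hb ha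
    calc (q+1)*(b^q*a) ≤ (q+1)*((q/(q+1))*b^(q+1) + (1/(q+1))*a^(q+1)) :=
          mul_le_mul_of_nonneg_left h hq1.le
      _ = q*b^(q+1) + a^(q+1) := by field_simp; try ring
  have hrt : a^(q-1)*t ≤ a^q*b := by
    calc a^(q-1)*t ≤ a^(q-1)*(a*b) := mul_le_mul_of_nonneg_left ht1 hr0
      _ = a^q*b := hrab
  have hst : b^(q-1)*t ≤ b^q*a := by
    calc b^(q-1)*t ≤ b^(q-1)*(a*b) := mul_le_mul_of_nonneg_left ht1 hs0
      _ = b^q*a := hsab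
  -- key endpoint scalar estimates
  have hmin0 : 0 < min q 1 := lt_min hq one_pos
  have hmin : q ≤ min q 1 * (q+1) := by
    rcases le_total q 1 with h|h
    · rw [min_eq_left h]; nlinarith [mul_pos hq hq]
    · rw [min_eq_right h]; linarith
  have hkey := key1 hq ha hb
  rw [← hm] at hkey
  have hf0 : 0 ≤ q*a^(q+1) + b^(q+1) - (q+1)*(a^q*b) :=
    le_trans (mul_nonneg hmin0.le hL0) hkey
  have hEp : (q+1)*(a^(q+1) + b^(q+1) - 2*(a^m*b^m))
      ≤ c*(q*a^(q+1) + b^(q+1) - (q+1)*(a^q*b)) := by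
    refine le_of_mul_le_mul_left ?_ hq
    rw [hcq]
    have Y1 := mul_le_mul_of_nonneg_left
      (mul_le_mul_of_nonneg_right hmin hL0) hq1.le
    have Y2 := mul_le_mul_of_nonneg_left
      (mul_le_mul_of_nonneg_right hkey hq1.le) hq1.le
    have Y3 : 0 ≤ (q+1)^2 * (q*a^(q+1) + b^(q+1) - (q+1)*(a^q*b)) :=
      mul_nonneg (sq_nonneg _) hf0
    linarith [Y1, Y2, Y3]
  have hEm : (q+1)*(a^(q+1) + b^(q+1) + 2*(a^m*b^m))
      ≤ c*(q*a^(q+1) + b^(q+1) + (q+1)*(a^q*b)) := by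
    refine le_of_mul_le_mul_left ?_ hq
    rw [hcq]
    have Z1 : 0 ≤ (q*(q+1))*(a^(q+1) + b^(q+1) - 2*(a^m*b^m)) :=
      mul_nonneg (mul_nonneg hq.le hq1.le) hL0
    have Z2 : 0 ≤ (q+1)^3 * (a^q*b) := mul_nonneg (by positivity) hg0
    have Z3 : 0 ≤ (q*q*(q+1)) * a^(q+1) :=
      mul_nonneg (mul_nonneg (mul_nonneg hq.le hq.le) hq1.le) hA0
    have Z4 : 0 ≤ (q+1) * b^(q+1) := mul_nonneg hq1.le hB0
    linarith [Z1, Z2, Z3, Z4]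
  refine ⟨?_, ?_, ?_⟩
  · -- first estimate
    rw [h3]
    refine le_of_mul_le_mul_left ?_ hq1
    rw [show (q+1)*(c*(bdry q u v)) = c*((q+1)*(bdry q u v)) by ring, h_bdry']
    have hκab' : (q+1)*((a^(m-1)*b^(m-1))*(a*b)) = (q+1)*(a^m*b^m) := by rw [hκab]
    have hrab' : (q+1)*(c*(a^(q-1)*(a*b))) = (q+1)*(c*(a^q*b)) := by rw [hrab]
    rcases le_total (c*(a^(q-1))) (2*(a^(m-1)*b^(m-1))) with hcase|hcase
    · have hβ : 0 ≤ 2*(a^(m-1)*b^(m-1)) - c*(a^(q-1)) := by linarith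
      have h4 := mul_le_mul_of_nonneg_left
        (mul_le_mul_of_nonneg_left ht2 hβ) hq1.le
      linarith [hEm, h4, hκab', hrab']
    · have hβ : 0 ≤ c*(a^(q-1)) - 2*(a^(m-1)*b^(m-1)) := by linarith
      have h4 := mul_le_mul_of_nonneg_left
        (mul_le_mul_of_nonneg_left ht1 hβ) hq1.le
      linarith [hEp, h4, hκab', hrab']
  · -- second estimate
    rw [inner_sub_left, h_bv, h_bu]
    refine le_of_mul_le_mul_left ?_ hq1
    rw [h_bdry']
    linarith [hy2, mul_le_mul_of_nonneg_left hst hq1.le]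
  · -- third estimate
    have h5 : (q+1)*0 ≤ (q+1)*(bdry q u v) := by
      rw [mul_zero, h_bdry']
      linarith [hy1, mul_le_mul_of_nonneg_left hrt hq1.le]
    exact le_of_mul_le_mul_left h5 hq1
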